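/- arXiv:2304.13323 — 2 statements merged into one kernel-verified Lean document; each statement's English description precedes it below -/
import Mathlib

section
/- Let B and B̄ be finite multisets (lists) of nonzero rational numbers with power sums p_n(B) = Σ_{b∈B} bⁿ and p_n(B̄) = Σ_{b∈B̄} bⁿ, let g ∈ ℚ[[X]] be the Todd series (the unique power series with g·(exp(X) − 1) = X), and set a = (p₁(B) − p₁(B̄))/2. Then exp(aX) · ∏_{b∈B} g(bX) · (∏_{b∈B̄} g(bX))⁻¹ = exp(H), where H is the power series supported on even positive powers of X whose coefficient of X^{2n} equals −(B_{2n}/(2n·(2n)!))·(p_{2n}(B) − p_{2n}(B̄)) for every n ≥ 1, with B_{2n} the 2n-th Bernoulli number. -/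
/-- Substitution of a power series `H` with zero constant coefficient into the exponential
series `exp = ∑_{k≥0} Xᵏ/k!`.  Since `H` has zero constant term, the coefficient of `Xⁿ` in
`exp(H)` only receives contributions from `Hᵏ` with `k ≤ n`, so the finite sum below computes
the substitution exactly. -/
noncomputable def expSubst {R : Type*} [CommRing R] [Algebra ℚ R] (h : PowerSeries R) :
    PowerSeries R :=
  PowerSeries.mk fun n => ∑ k ∈ Finset.range (n + 1),
    algebraMap ℚ R (1 / k.factorial) * PowerSeries.coeff n (h ^ k)



open PowerSeries
namespace ToddAux

lemma coeff_expSubst (h : PowerSeries ℚ) (n : ℕ) :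
    coeff n (expSubst h) =
      ∑ k ∈ Finset.range (n + 1), (1 / (k.factorial : ℚ)) * coeff n (h ^ k) := by
  simp [expSubst]

lemma coeff_pow_eq_zero {h : PowerSeries ℚ} (hh : constantCoeff h = 0) {n k : ℕ}
    (hnk : n < k) : coeff n (h ^ k) = 0 := by
  have hd : (X : PowerSeries ℚ) ^ k ∣ h ^ k := pow_dvd_pow_of_dvd (X_dvd_iff.2 hh) k
  exact (X_pow_dvd_iff.1 hd) n hnk

lemma coeff_expSubst_of_le {h : PowerSeries ℚ} (hh : constantCoeff h = 0) {n N : ℕ}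
    (hnN : n ≤ N) :
    coeff n (expSubst h) =
      ∑ k ∈ Finset.range (N + 1), (1 / (k.factorial : ℚ)) * coeff n (h ^ k) := by
  rw [coeff_expSubst]
  apply Finset.sum_subset
  · exact Finset.range_subset_range.2 (by omega)
  · intro k hk hk2
    simp only [Finset.mem_range] at hk hk2
    rw [coeff_pow_eq_zero hh (by omega), mul_zero]

lemma coeff_mul_pow (h : PowerSeries ℚ) (k n : ℕ) :
    coeff n (d⁄dX ℚ h * h ^ k) * ((k : ℚ) + 1) = coeff (n + 1) (h ^ (k + 1)) * (n + 1) := by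
  have hl : d⁄dX ℚ (h ^ (k + 1)) = (k + 1) • (h ^ k • d⁄dX ℚ h) := by
    simpa using Derivation.leibniz_pow (d⁄dX ℚ) (a := h) (k + 1)
  have h2 := congrArg (coeff n) hl
  rw [coeff_derivative] at h2
  rw [h2, mul_comm (d⁄dX ℚ h)]
  simp only [smul_eq_mul, map_nsmul, nsmul_eq_mul]
  rw [← map_natCast (C (R := ℚ)) (k+1), coeff_C_mul]
  push_cast
  ring

lemma derivative_expSubst {h : PowerSeries ℚ} (hh : constantCoeff h = 0) :
    d⁄dX ℚ (expSubst h) = d⁄dX ℚ h * expSubst h := by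
  ext n
  rw [coeff_derivative, coeff_expSubst_of_le hh (Nat.le_refl (n + 1))]
  -- RHS side computation
  have hE : coeff n (d⁄dX ℚ h * expSubst h) =
      ∑ k ∈ Finset.range (n + 1), (1 / (k.factorial : ℚ)) * coeff n (d⁄dX ℚ h * h ^ k) := by
    rw [coeff_mul]
    have : ∀ p ∈ Finset.HasAntidiagonal.antidiagonal n,
        coeff p.1 (d⁄dX ℚ h) * coeff p.2 (expSubst h) =
        ∑ k ∈ Finset.range (n + 1),
          (1 / (k.factorial : ℚ)) * (coeff p.1 (d⁄dX ℚ h) * coeff p.2 (h ^ k)) := by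
      intro p hp
      rw [Finset.HasAntidiagonal.mem_antidiagonal] at hp
      rw [coeff_expSubst_of_le hh (show p.2 ≤ n by omega), Finset.mul_sum]
      exact Finset.sum_congr rfl fun k _ => by ring
    rw [Finset.sum_congr rfl this, Finset.sum_comm]
    refine Finset.sum_congr rfl fun k _ => ?_
    rw [← Finset.mul_sum, coeff_mul]
  rw [hE]
  rw [Finset.sum_range_succ' (fun k => (1 / (k.factorial : ℚ)) * coeff (n+1) (h ^ k)) (n+1)]
  simp only [pow_zero, Nat.factorial_zero, Nat.cast_one, map_one]
  rw [coeff_one]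
  simp only [Nat.succ_ne_zero, if_false, mul_zero, add_zero]
  rw [Finset.sum_mul]
  refine Finset.sum_congr rfl fun k hk => ?_
  have hcp := coeff_mul_pow h k n
  have hk1 : ((k : ℚ) + 1) ≠ 0 := by positivity
  have : coeff n (d⁄dX ℚ h * h ^ k) = coeff (n + 1) (h ^ (k + 1)) * (n + 1) / ((k:ℚ) + 1) := by
    field_simp
    linarith [hcp]
  rw [this, Nat.factorial_succ]
  push_cast
  have : (k.factorial : ℚ) ≠ 0 := by exact_mod_cast Nat.factorial_ne_zero k
  field_simp
  try ring
  try exact Or.inl trivial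

lemma ode_unique {P f h : PowerSeries ℚ} (hf : d⁄dX ℚ f = P * f) (hh : d⁄dX ℚ h = P * h)
    (hc : constantCoeff f = constantCoeff h) : f = h := by
  ext n
  induction n using Nat.strong_induction_on with
  | _ n ih =>
    match n with
    | 0 => simpa using hc
    | n + 1 =>
      have h1 : coeff n (d⁄dX ℚ f) = coeff n (d⁄dX ℚ h) := by
        rw [hf, hh, coeff_mul, coeff_mul]
        refine Finset.sum_congr rfl fun p hp => ?_
        rw [Finset.HasAntidiagonal.mem_antidiagonal] at hp
        rw [ih p.2 (by omega)]
      rw [coeff_derivative, coeff_derivative] at h1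
      exact mul_right_cancel₀ (by positivity : ((n : ℚ) + 1) ≠ 0) h1

lemma constantCoeff_expSubst (h : PowerSeries ℚ) : constantCoeff (expSubst h) = 1 := by
  rw [← coeff_zero_eq_constantCoeff_apply, coeff_expSubst]
  simp

lemma expSubst_zero : expSubst (0 : PowerSeries ℚ) = 1 := by
  ext n
  rw [coeff_expSubst, Finset.sum_eq_single 0]
  · simp
  · intro k _ hk0
    rw [zero_pow hk0, map_zero, mul_zero]
  · intro hn
    simp at hn

lemma expSubst_add {A B : PowerSeries ℚ} (hA : constantCoeff A = 0)
    (hB : constantCoeff B = 0) : expSubst (A + B) = expSubst A * expSubst B := by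
  refine ode_unique (P := d⁄dX ℚ A + d⁄dX ℚ B) ?_ ?_ ?_
  · rw [derivative_expSubst (by simp [hA, hB]), map_add]
  · rw [Derivation.leibniz, smul_eq_mul, smul_eq_mul, derivative_expSubst hA,
      derivative_expSubst hB]
    ring
  · simp [constantCoeff_expSubst]

lemma rescale_expSubst (c : ℚ) (h : PowerSeries ℚ) :
    rescale c (expSubst h) = expSubst (rescale c h) := by
  ext n
  rw [coeff_rescale, coeff_expSubst, coeff_expSubst, Finset.mul_sum]
  refine Finset.sum_congr rfl fun k _ => ?_
  rw [← map_pow, coeff_rescale]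
  ring

lemma exp_eq_expSubst : exp ℚ = expSubst (X : PowerSeries ℚ) := by
  ext n
  rw [coeff_expSubst, coeff_exp, Finset.sum_eq_single n]
  · simp [coeff_X_pow]
  · intro k _ hkn
    rw [coeff_X_pow, if_neg (fun hh => hkn hh.symm), mul_zero]
  · intro hn
    simp at hn

noncomputable def Lser : PowerSeries ℚ :=
  PowerSeries.mk fun m => if m = 0 then 0 else -(bernoulli' m / (m * m.factorial))

lemma constantCoeff_Lser : constantCoeff Lser = 0 := by
  rw [← coeff_zero_eq_constantCoeff_apply, Lser, coeff_mk]
  simp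

lemma key_identity : X * d⁄dX ℚ Lser + X + bernoulliPowerSeries ℚ = 1 := by
  ext n
  rw [map_add, map_add]
  match n with
  | 0 =>
    simp [mul_comm X, bernoulliPowerSeries, coeff_mk]
  | n + 1 =>
    rw [coeff_succ_X_mul, coeff_derivative, Lser, coeff_mk,
      show (bernoulliPowerSeries ℚ) = PowerSeries.mk fun n =>
        algebraMap ℚ ℚ (bernoulli n / n.factorial) from rfl, coeff_mk, coeff_one, coeff_X]
    simp only [Nat.succ_ne_zero, if_false, Nat.cast_add, Nat.cast_one, eq_ratCast, Rat.cast_eq_id,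
      id_eq]
    match n with
    | 0 => norm_num [bernoulli'_one, bernoulli_one]
    | n + 1 =>
      rw [bernoulli_eq_bernoulli'_of_ne_one (by omega), if_neg (by omega)]
      have h1 : ((n : ℚ) + 1 + 1) ≠ 0 := by positivity
      have h2 : ((n + 2).factorial : ℚ) ≠ 0 := by exact_mod_cast (n + 2).factorial_ne_zero
      push_cast at h2 ⊢
      field_simp
      ring

lemma todd_eq_expSubst {g : PowerSeries ℚ} (hg : g * (exp ℚ - 1) = X) :
    g = expSubst Lser := by
  have hexp1 : (exp ℚ - 1 : PowerSeries ℚ) ≠ 0 := by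
    intro hcon
    have h := congrArg (coeff 1) hcon
    simp [coeff_exp] at h
  have hgb : g = bernoulliPowerSeries ℚ :=
    mul_right_cancel₀ hexp1 (by rw [hg, bernoulliPowerSeries_mul_exp_sub_one])
  have hdexp : d⁄dX ℚ (exp ℚ) = exp ℚ := by
    ext n
    rw [coeff_derivative, coeff_exp, coeff_exp]
    simp only [eq_ratCast, Rat.cast_eq_id, id_eq]
    rw [Nat.factorial_succ]
    have h1 : (n.factorial : ℚ) ≠ 0 := by exact_mod_cast n.factorial_ne_zero
    have h2 : ((n : ℚ) + 1) ≠ 0 := by positivity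
    push_cast
    field_simp
  have hD := congrArg (d⁄dX ℚ) hg
  rw [Derivation.leibniz, smul_eq_mul, smul_eq_mul, derivative_X, map_sub, hdexp,
    Derivation.map_one_eq_zero, sub_zero] at hD
  have h3 : X * d⁄dX ℚ Lser + X + g = 1 := by rw [hgb]; exact key_identity
  have hkey : (d⁄dX ℚ g - d⁄dX ℚ Lser * g) * (exp ℚ - 1) = 0 := by
    linear_combination hD - h3 - (d⁄dX ℚ Lser) * hg - hg
  have hdg : d⁄dX ℚ g = d⁄dX ℚ Lser * g := by
    rcases mul_eq_zero.1 hkey with h | h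
    · exact sub_eq_zero.1 h
    · exact absurd h hexp1
  refine ode_unique hdg (derivative_expSubst constantCoeff_Lser) ?_
  rw [constantCoeff_expSubst, hgb, ← coeff_zero_eq_constantCoeff_apply,
    show (bernoulliPowerSeries ℚ) = PowerSeries.mk fun n =>
      algebraMap ℚ ℚ (bernoulli n / n.factorial) from rfl, coeff_mk]
  simp

lemma constantCoeff_msum (s : Multiset (PowerSeries ℚ))
    (hs : ∀ f ∈ s, constantCoeff f = 0) : constantCoeff s.sum = 0 := by
  rw [map_multiset_sum]
  apply Multiset.sum_eq_zero
  intro x hx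
  obtain ⟨f, hf, rfl⟩ := Multiset.mem_map.1 hx
  exact hs f hf

lemma expSubst_msum (s : Multiset (PowerSeries ℚ))
    (hs : ∀ f ∈ s, constantCoeff f = 0) :
    expSubst s.sum = (s.map expSubst).prod := by
  induction s using Multiset.induction with
  | empty => simpa using expSubst_zero
  | cons a s ih =>
    rw [Multiset.sum_cons, Multiset.map_cons, Multiset.prod_cons,
      expSubst_add (hs a (Multiset.mem_cons_self a s))
        (constantCoeff_msum s fun f hf => hs f (Multiset.mem_cons_of_mem hf)),
      ih fun f hf => hs f (Multiset.mem_cons_of_mem hf)]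

lemma coeff_msum (m : ℕ) (s : Multiset ℚ) (f : PowerSeries ℚ) :
    coeff m ((s.map fun b => rescale b f).sum) =
      (s.map fun b => b ^ m).sum * coeff m f := by
  rw [map_multiset_sum, Multiset.map_map,
    Multiset.map_congr (f := (coeff m) ∘ fun b => rescale b f)
      (g := fun b => b ^ m * coeff m f) rfl (fun b _ => coeff_rescale f b m),
    Multiset.sum_map_mul_right]

lemma constantCoeff_rescaleL (b : ℚ) : constantCoeff (rescale b Lser) = 0 := by
  rw [← coeff_zero_eq_constantCoeff_apply, coeff_rescale, pow_zero, one_mul,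
    coeff_zero_eq_constantCoeff_apply, constantCoeff_Lser]

end ToddAux


open ToddAux

/-- Let `B`, `B̄` be finite multisets of nonzero rationals with power sums
`p_n(B) = ∑_{b∈B} bⁿ`, `g` the Todd series (`g·(exp(X) − 1) = X`), and
`a = (p₁(B) − p₁(B̄))/2`.  Then
`exp(aX)·∏_{b∈B} g(bX)·(∏_{b∈B̄} g(bX))⁻¹ = exp(H)` where `H` is supported on even
positive powers of `X`, with coefficient of `X^{2n}` equal to
`−(B_{2n}/(2n·(2n)!))·(p_{2n}(B) − p_{2n}(B̄))` for `n ≥ 1`. -/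
theorem generalized_todd_log (B Bbar : Multiset ℚ)
    (hB : ∀ b ∈ B, b ≠ 0) (hBbar : ∀ b ∈ Bbar, b ≠ 0)
    (g : PowerSeries ℚ) (hg : g * (PowerSeries.exp ℚ - 1) = PowerSeries.X)
    (a : ℚ) (ha : a = ((B.map fun b => b ^ 1).sum - (Bbar.map fun b => b ^ 1).sum) / 2)
    (H : PowerSeries ℚ)
    (hH : H = PowerSeries.mk fun m =>
      if m ≠ 0 ∧ Even m then
        -(bernoulli m / (m * m.factorial)) *
          ((B.map fun b => b ^ m).sum - (Bbar.map fun b => b ^ m).sum)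
      else 0) :
    PowerSeries.rescale a (PowerSeries.exp ℚ) *
        (B.map fun b => PowerSeries.rescale b g).prod *
        Ring.inverse ((Bbar.map fun b => PowerSeries.rescale b g).prod) = expSubst H := by
  classical
  have hgL := todd_eq_expSubst hg
  set SB : PowerSeries ℚ := ((B.map fun b => rescale b Lser)).sum with hSBdef
  set Sb : PowerSeries ℚ := ((Bbar.map fun b => rescale b Lser)).sum with hSbdef
  have hSB0 : constantCoeff SB = 0 := constantCoeff_msum _ (by
    intro f hf; obtain ⟨b, _, rfl⟩ := Multiset.mem_map.1 hf; exact constantCoeff_rescaleL b)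
  have hSb0 : constantCoeff Sb = 0 := constantCoeff_msum _ (by
    intro f hf; obtain ⟨b, _, rfl⟩ := Multiset.mem_map.1 hf; exact constantCoeff_rescaleL b)
  have hprodB : (B.map fun b => rescale b g).prod = expSubst SB := by
    rw [hgL, hSBdef, expSubst_msum _ (by
      intro f hf; obtain ⟨b, _, rfl⟩ := Multiset.mem_map.1 hf; exact constantCoeff_rescaleL b), Multiset.map_map]
    exact congrArg Multiset.prod (Multiset.map_congr rfl fun b _ =>
      (rescale_expSubst b Lser))
  have hprodBbar : (Bbar.map fun b => rescale b g).prod = expSubst Sb := by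
    rw [hgL, hSbdef, expSubst_msum _ (by
      intro f hf; obtain ⟨b, _, rfl⟩ := Multiset.mem_map.1 hf; exact constantCoeff_rescaleL b), Multiset.map_map]
    exact congrArg Multiset.prod (Multiset.map_congr rfl fun b _ =>
      (rescale_expSubst b Lser))
  have h1 : expSubst Sb * expSubst (-Sb) = 1 := by
    rw [← expSubst_add hSb0 (by simp [hSb0]), add_neg_cancel, expSubst_zero]
  have hinv : Ring.inverse (expSubst Sb) = expSubst (-Sb) :=
    Ring.inverse_unit (Units.mkOfMulEqOne _ _ h1)
  have hexpX : rescale a (exp ℚ) = expSubst (rescale a X) := by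
    rw [exp_eq_expSubst, rescale_expSubst]
  have haX0 : constantCoeff (rescale a (X : PowerSeries ℚ)) = 0 := by
    rw [← coeff_zero_eq_constantCoeff_apply, coeff_rescale]
    simp
  rw [hexpX, hprodB, hprodBbar, hinv,
    ← expSubst_add haX0 hSB0, ← expSubst_add (by simp [haX0, hSB0]) (by simp [hSb0])]
  refine congrArg expSubst ?_
  subst hH
  ext m
  rw [map_add, map_add, map_neg, coeff_rescale, PowerSeries.coeff_mk,
    hSBdef, hSbdef, coeff_msum, coeff_msum, coeff_X]
  rw [show coeff m Lser = if m = 0 then 0 else -(bernoulli' m / (m * m.factorial)) from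
    PowerSeries.coeff_mk m _]
  match m with
  | 0 => simp
  | 1 =>
    rw [if_pos rfl, if_neg one_ne_zero, if_neg (by simp), ha]
    simp only [bernoulli'_one, Nat.cast_one, Nat.factorial_one]
    ring
  | k + 2 =>
    rw [if_neg (show ¬ (k + 2 = 1) by omega), if_neg (show ¬ (k + 2 = 0) by omega)]
    by_cases he : Even (k + 2)
    · rw [if_pos (⟨show k + 2 ≠ 0 by omega, he⟩ : (k + 2 ≠ 0) ∧ Even (k + 2)),
        bernoulli_eq_bernoulli'_of_ne_one (show k + 2 ≠ 1 by omega)]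
      ring
    · rw [if_neg (fun hc => he hc.2),
        bernoulli'_eq_zero_of_odd (Nat.not_even_iff_odd.1 he) (by omega)]
      simp
end

section
/- The following identity holds for formal Laurent series in s with coefficients in the power series ring ℚ[[t]]: the coefficient of s⁰ in 1/((1 − e^s)²·(1 − t)) + 2/((1 − e^{−s})(1 − e^s)(1 − t·e^{s})) + 1/((1 − e^{−s})²·(1 − t·e^{2s})) equals (1 + t)·(1 − t)⁻³ in ℚ[[t]]. Here e^{cs} denotes the rescaled exponential series in s (with coefficients in ℚ[[t]]), the factors 1 − t, 1 − t·e^{s}, 1 − t·e^{2s} are invertible because their s-constant terms are units of ℚ[[t]], and 1 − e^{±s} have s-order 1, hence are invertible in the Laurent series ring over ℚ[[t]]. (This computes the Ehrhart series Σ_{n≥0}(n+1)²tⁿ of the unit square via Brion's decomposition.) -/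
open PowerSeries HahnSeries

/-- A ring hom commutes with `Ring.inverse` on units. -/
lemma EhrhartAux.map_ringInverse {R S : Type*} [CommRing R] [CommRing S] (f : R →+* S) {a : R}
    (h : IsUnit a) : f (Ring.inverse a) = Ring.inverse (f a) := by
  obtain ⟨u, rfl⟩ := h
  rw [Ring.inverse_unit]
  obtain ⟨v, hv⟩ := u.isUnit.map f
  rw [← hv, Ring.inverse_unit]
  have h1 : f ↑u⁻¹ * ↑v = 1 := by rw [hv, ← map_mul, Units.inv_mul, map_one]
  calc f ↑u⁻¹ = f ↑u⁻¹ * (↑v * ↑v⁻¹) := by rw [Units.mul_inv, mul_one]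
  _ = ↑v⁻¹ := by rw [← mul_assoc, h1, one_mul]

/-- The key polynomial identity behind Brion's decomposition for the square. -/
lemma EhrhartAux.key {R : Type*} [CommRing R] (U V t : R) (h : U * V = 1) :
    (1 - V) ^ 2 * ((1 - t * U) * (1 - t * (U * U))) +
      2 * ((1 - U) * (1 - V)) * ((1 - t) * (1 - t * (U * U))) +
      (1 - U) ^ 2 * ((1 - t) * (1 - t * U)) =
    (1 + t * U) * ((1 - U) ^ 2 * (1 - V) ^ 2) := by
  linear_combination (U ^ 2 * V * t ^ 2 - U ^ 2 * V * t + U * V * t - U * V - U * t ^ 2 -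
    U * t + 2 * U - 2 * V * t + 2 * V + 3 * t - 3) * h


/-- Abstract form of the Brion decomposition computation. -/
lemma EhrhartAux.main {R : Type*} [CommRing R] (U V T U2 : R) (hUV : U * V = 1)
    (hU2 : U * U = U2)
    (hu1 : IsUnit ((1 - U) ^ 2 * (1 - T)))
    (hu2 : IsUnit ((1 - V) * (1 - U) * (1 - T * U)))
    (hu3 : IsUnit ((1 - V) ^ 2 * (1 - T * U2)))
    (hD : IsUnit ((1 - T) * (1 - T * U) * (1 - T * U2)))
    (hM : IsUnit ((1 - U) ^ 2 * (1 - V) ^ 2 * ((1 - T) * (1 - T * U) * (1 - T * U2)))) :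
    Ring.inverse ((1 - U) ^ 2 * (1 - T)) +
      2 * Ring.inverse ((1 - V) * (1 - U) * (1 - T * U)) +
      Ring.inverse ((1 - V) ^ 2 * (1 - T * U2)) =
    (1 + T * U) * Ring.inverse ((1 - T) * (1 - T * U) * (1 - T * U2)) := by
  subst hU2
  have h1 := Ring.inverse_mul_cancel _ hu1
  have h2 := Ring.inverse_mul_cancel _ hu2
  have h3 := Ring.inverse_mul_cancel _ hu3
  have h4 := Ring.inverse_mul_cancel _ hD
  have key' := EhrhartAux.key U V T hUV
  refine hM.mul_right_cancel ?_
  linear_combination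
    ((1 - V) ^ 2 * ((1 - T * U) * (1 - T * (U * U)))) * h1 +
    (2 * ((1 - U) * (1 - V)) * ((1 - T) * (1 - T * (U * U)))) * h2 +
    ((1 - U) ^ 2 * ((1 - T) * (1 - T * U))) * h3 -
    ((1 + T * U) * ((1 - U) ^ 2 * (1 - V) ^ 2)) * h4 + key'

noncomputable def expLaurentT (c : ℚ) : LaurentSeries (PowerSeries ℚ) :=
  (HahnSeries.ofPowerSeries ℤ (PowerSeries ℚ))
    (PowerSeries.rescale (PowerSeries.C c) (PowerSeries.exp (PowerSeries ℚ)))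

noncomputable def tConst : LaurentSeries (PowerSeries ℚ) :=
  HahnSeries.C (PowerSeries.X : PowerSeries ℚ)

lemma EhrhartAux.expLaurentT_mul (a b : ℚ) :
    expLaurentT a * expLaurentT b = expLaurentT (a + b) := by
  rw [expLaurentT, expLaurentT, expLaurentT, ← map_mul, exp_mul_exp_eq_exp_add, ← map_add]

lemma EhrhartAux.expLaurentT_zero : expLaurentT 0 = 1 := by
  rw [expLaurentT, map_zero, rescale_zero]
  simp

lemma EhrhartAux.isUnit_single_one : IsUnit (HahnSeries.single (1 : ℤ) (1 : PowerSeries ℚ)) := by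
  refine IsUnit.of_mul_eq_one (HahnSeries.single (-1 : ℤ) 1) ?_
  rw [HahnSeries.single_mul_single]
  norm_num [HahnSeries.single_zero_one]

lemma EhrhartAux.isUnit_one_sub_exp {c : ℚ} (hc : c ≠ 0) : IsUnit (1 - expLaurentT c) := by
  have hdvd : (PowerSeries.X : (PowerSeries ℚ)⟦X⟧) ∣
      (rescale (PowerSeries.C c) (exp (PowerSeries ℚ)) - 1) := by
    rw [PowerSeries.X_dvd_iff, map_sub, map_one, ← coeff_zero_eq_constantCoeff_apply]
    simp [coeff_rescale, coeff_exp]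
  obtain ⟨g, hg⟩ := hdvd
  have hg0 : constantCoeff g = PowerSeries.C c := by
    have h1 : coeff 1 (rescale (PowerSeries.C c) (exp (PowerSeries ℚ)) - 1)
        = PowerSeries.C c := by
      simp [coeff_rescale, coeff_exp, Nat.factorial]
    rw [hg] at h1
    have h2 := PowerSeries.coeff_succ_X_mul 0 g
    rw [show (0 : ℕ) + 1 = 1 from rfl] at h2
    rw [h2] at h1
    rwa [coeff_zero_eq_constantCoeff] at h1
  have hgu : IsUnit g := by
    rw [PowerSeries.isUnit_iff_constantCoeff, hg0]
    exact (isUnit_iff_ne_zero.mpr hc).map PowerSeries.C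
  have heq : (1 : LaurentSeries (PowerSeries ℚ)) - expLaurentT c
      = -(HahnSeries.single (1 : ℤ) 1 * (ofPowerSeries ℤ (PowerSeries ℚ) g)) := by
    rw [← HahnSeries.ofPowerSeries_X, ← map_mul, ← hg, map_sub, map_one, expLaurentT]
    ring
  rw [heq]
  exact (EhrhartAux.isUnit_single_one.mul (hgu.map _)).neg

lemma EhrhartAux.constantCoeff_rescale_exp (c : ℚ) :
    constantCoeff
      (rescale (PowerSeries.C c) (exp (PowerSeries ℚ))) = 1 := by
  rw [← coeff_zero_eq_constantCoeff_apply, coeff_rescale]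
  simp [coeff_exp]

lemma EhrhartAux.isUnit_one_sub_X : IsUnit (1 - PowerSeries.X : PowerSeries ℚ) := by
  rw [PowerSeries.isUnit_iff_constantCoeff]
  simp

lemma EhrhartAux.tConst_eq :
    tConst = ofPowerSeries ℤ (PowerSeries ℚ)
      (PowerSeries.C (PowerSeries.X : PowerSeries ℚ)) := by
  rw [ofPowerSeries_C, tConst]

lemma EhrhartAux.isUnit_one_sub_tConst : IsUnit (1 - tConst) := by
  have heq : (1 : LaurentSeries (PowerSeries ℚ)) - tConst
      = ofPowerSeries ℤ (PowerSeries ℚ)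
        (1 - PowerSeries.C (PowerSeries.X : PowerSeries ℚ)) := by
    rw [map_sub, map_one, ← EhrhartAux.tConst_eq]
  rw [heq]
  refine IsUnit.map _ ?_
  rw [PowerSeries.isUnit_iff_constantCoeff]
  simpa using EhrhartAux.isUnit_one_sub_X

lemma EhrhartAux.one_sub_tMul_eq (c : ℚ) :
    (1 : LaurentSeries (PowerSeries ℚ)) - tConst * expLaurentT c
      = ofPowerSeries ℤ (PowerSeries ℚ)
        (1 - PowerSeries.C (PowerSeries.X : PowerSeries ℚ) *
          rescale (PowerSeries.C c) (exp (PowerSeries ℚ))) := by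
  rw [map_sub, map_one, map_mul, ← EhrhartAux.tConst_eq, expLaurentT]

lemma EhrhartAux.isUnit_one_sub_tMul_ps (c : ℚ) :
    IsUnit (1 - PowerSeries.C (PowerSeries.X : PowerSeries ℚ) *
      rescale (PowerSeries.C c) (exp (PowerSeries ℚ))) := by
  rw [PowerSeries.isUnit_iff_constantCoeff]
  simpa [EhrhartAux.constantCoeff_rescale_exp] using EhrhartAux.isUnit_one_sub_X

lemma EhrhartAux.isUnit_one_sub_tMul (c : ℚ) :
    IsUnit ((1 : LaurentSeries (PowerSeries ℚ)) - tConst * expLaurentT c) := by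
  rw [EhrhartAux.one_sub_tMul_eq]
  exact (EhrhartAux.isUnit_one_sub_tMul_ps c).map _

set_option maxHeartbeats 3000000 in
open EhrhartAux in
/-- For Laurent series in `s` with coefficients in `ℚ[[t]]`: the factors
`1 − e^{±s}`, `1 − t`, `1 − t·e^s`, `1 − t·e^{2s}` are invertible, and the coefficient of
`s⁰` in `1/((1 − e^s)²(1 − t)) + 2/((1 − e^{−s})(1 − e^s)(1 − t e^s)) +
1/((1 − e^{−s})²(1 − t e^{2s}))` equals `(1 + t)(1 − t)⁻³` in `ℚ[[t]]`
(the Ehrhart series `∑ (n+1)² tⁿ` of the unit square). -/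
theorem ehrhart_series_unit_square :
    IsUnit (1 - expLaurentT 1) ∧ IsUnit (1 - expLaurentT (-1)) ∧
    IsUnit (1 - tConst) ∧
    IsUnit (1 - tConst * expLaurentT 1) ∧ IsUnit (1 - tConst * expLaurentT 2) ∧
    HahnSeries.coeff
        (Ring.inverse ((1 - expLaurentT 1) ^ 2 * (1 - tConst)) +
          2 * Ring.inverse
            ((1 - expLaurentT (-1)) * (1 - expLaurentT 1) * (1 - tConst * expLaurentT 1)) +
          Ring.inverse ((1 - expLaurentT (-1)) ^ 2 * (1 - tConst * expLaurentT 2))) 0 =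
      (1 + PowerSeries.X) * Ring.inverse ((1 - PowerSeries.X : PowerSeries ℚ) ^ 3) := by
  have hA : IsUnit (1 - expLaurentT 1) := isUnit_one_sub_exp one_ne_zero
  have hB : IsUnit (1 - expLaurentT (-1)) := isUnit_one_sub_exp (by norm_num)
  have hd1 : IsUnit (1 - tConst) := isUnit_one_sub_tConst
  have hd2 : IsUnit (1 - tConst * expLaurentT 1) := isUnit_one_sub_tMul 1
  have hd3 : IsUnit (1 - tConst * expLaurentT 2) := isUnit_one_sub_tMul 2
  refine ⟨hA, hB, hd1, hd2, hd3, ?_⟩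
  have hUV : expLaurentT 1 * expLaurentT (-1) = 1 := by
    rw [expLaurentT_mul]; norm_num [expLaurentT_zero]
  have hU2 : expLaurentT 1 * expLaurentT 1 = expLaurentT 2 := by
    rw [expLaurentT_mul]; norm_num
  have hE := EhrhartAux.main (expLaurentT 1) (expLaurentT (-1)) tConst (expLaurentT 2)
    hUV hU2 ((hA.pow 2).mul hd1) ((hB.mul hA).mul hd2) ((hB.pow 2).mul hd3)
    ((hd1.mul hd2).mul hd3) (((hA.pow 2).mul (hB.pow 2)).mul ((hd1.mul hd2).mul hd3))
  rw [hE]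
  -- now rewrite as image of a single power series
  have himg1 : (1 : LaurentSeries (PowerSeries ℚ)) + tConst * expLaurentT 1
      = ofPowerSeries ℤ (PowerSeries ℚ)
        (1 + PowerSeries.C (PowerSeries.X : PowerSeries ℚ) *
          rescale (PowerSeries.C (1 : ℚ)) (exp (PowerSeries ℚ))) := by
    rw [map_add, map_one, map_mul, ← tConst_eq, expLaurentT]
  have himgD : (1 - tConst) * (1 - tConst * expLaurentT 1) * (1 - tConst * expLaurentT 2)
      = ofPowerSeries ℤ (PowerSeries ℚ)
        ((1 - PowerSeries.C (PowerSeries.X : PowerSeries ℚ)) *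
          (1 - PowerSeries.C (PowerSeries.X : PowerSeries ℚ) *
            rescale (PowerSeries.C (1 : ℚ)) (exp (PowerSeries ℚ))) *
          (1 - PowerSeries.C (PowerSeries.X : PowerSeries ℚ) *
            rescale (PowerSeries.C (2 : ℚ)) (exp (PowerSeries ℚ)))) := by
    rw [map_mul, map_mul, ← one_sub_tMul_eq, ← one_sub_tMul_eq, map_sub, map_one, ← tConst_eq]
  have hcq2 : constantCoeff
      ((1 - PowerSeries.C (PowerSeries.X : PowerSeries ℚ)) *
        (1 - PowerSeries.C (PowerSeries.X : PowerSeries ℚ) *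
          rescale (PowerSeries.C (1 : ℚ)) (exp (PowerSeries ℚ))) *
        (1 - PowerSeries.C (PowerSeries.X : PowerSeries ℚ) *
          rescale (PowerSeries.C (2 : ℚ)) (exp (PowerSeries ℚ))))
      = (1 - PowerSeries.X) ^ 3 := by
    rw [map_mul, map_mul, map_sub, map_sub, map_sub, map_one, map_mul, map_mul,
      constantCoeff_rescale_exp, constantCoeff_rescale_exp, PowerSeries.constantCoeff_C]
    ring
  have hq2u : IsUnit ((1 - PowerSeries.C (PowerSeries.X : PowerSeries ℚ)) *
      (1 - PowerSeries.C (PowerSeries.X : PowerSeries ℚ) *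
        rescale (PowerSeries.C (1 : ℚ)) (exp (PowerSeries ℚ))) *
      (1 - PowerSeries.C (PowerSeries.X : PowerSeries ℚ) *
        rescale (PowerSeries.C (2 : ℚ)) (exp (PowerSeries ℚ)))) := by
    rw [PowerSeries.isUnit_iff_constantCoeff, hcq2]
    exact isUnit_one_sub_X.pow 3
  rw [himg1, himgD, ← map_ringInverse _ hq2u, ← map_mul]
  rw [show (0 : ℤ) = ((0 : ℕ) : ℤ) by simp, ofPowerSeries_apply_coeff,
    coeff_zero_eq_constantCoeff_apply, map_mul, map_add, map_one, map_mul,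
    constantCoeff_rescale_exp, PowerSeries.constantCoeff_C,
    map_ringInverse _ hq2u, hcq2, mul_one]
end
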